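/- For the HMM with M(0) = [[0,0],[1,0]] and M(1) = [[0,1],[0,0]] (so M = [[0,1],[1,0]] is irreducible but periodic), starting from α₀ = (x, 1−x) with x ∉ {0, 1/2, 1}, the distributions of α_{2n} converge to the measure giving mass x to (1,0) and 1−x to (0,1), while the distributions of α_{2n+1} converge to the measure giving mass x to (0,1) and 1−x to (1,0); these two limits are distinct, so the distribution of α_n does not converge weakly. -/

import Mathlib

open Matrix Filter

/-- The stepping matrices `M(0) = [[0,0],[1,0]]` and `M(1) = [[0,1],[0,0]]`. -/
def Mex14 : Fin 2 → Matrix (Fin 2) (Fin 2) ℝ :=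
  ![!![0, 0; 1, 0], !![0, (1:ℝ); 0, 0]]

/-- The product `M(w)` of a word `w`. -/
def wordProd14 {n : ℕ} (w : Fin n → Fin 2) : Matrix (Fin 2) (Fin 2) ℝ :=
  (List.ofFn (fun i => Mex14 (w i))).prod

/-- The integral of a test function `f` against the distribution of `αₙ` started at `α₀`:
`∫ f dμₙ = Σ_{w ∈ 𝒴ⁿ} (α₀ M(w) e) f(α₀ M(w)/(α₀ M(w) e))`. -/
noncomputable def distInt14 (α₀ : Fin 2 → ℝ) (n : ℕ) (f : (Fin 2 → ℝ) → ℝ) : ℝ :=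
  ∑ w : Fin n → Fin 2,
    (∑ j, (α₀ ᵥ* wordProd14 w) j) *
      f ((∑ j, (α₀ ᵥ* wordProd14 w) j)⁻¹ • (α₀ ᵥ* wordProd14 w))


lemma wordProd14_cons {n : ℕ} (a : Fin 2) (w : Fin n → Fin 2) :
    wordProd14 (Fin.cons a w) = Mex14 a * wordProd14 w := by
  unfold wordProd14
  rw [List.ofFn_succ, List.prod_cons]
  simp [Fin.cons_succ, Fin.cons_zero]

lemma distInt14_succ (α : Fin 2 → ℝ) (n : ℕ) (f : (Fin 2 → ℝ) → ℝ) :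
    distInt14 α (n+1) f = ∑ a : Fin 2, distInt14 (α ᵥ* Mex14 a) n f := by
  unfold distInt14
  rw [← Fintype.sum_equiv (Fin.consEquiv fun _ => Fin 2)
      (fun p => (∑ j, ((α ᵥ* Mex14 p.1) ᵥ* wordProd14 p.2) j) *
        f ((∑ j, ((α ᵥ* Mex14 p.1) ᵥ* wordProd14 p.2) j)⁻¹ • ((α ᵥ* Mex14 p.1) ᵥ* wordProd14 p.2)))
      _ ?_ , Fintype.sum_prod_type]
  rintro ⟨a, w⟩
  simp only [Fin.consEquiv, Equiv.coe_fn_mk, wordProd14_cons, ← Matrix.vecMul_vecMul]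

lemma distInt14_smul (c : ℝ) (hc : c ≠ 0) (α : Fin 2 → ℝ) (n : ℕ) (f : (Fin 2 → ℝ) → ℝ) :
    distInt14 (c • α) n f = c * distInt14 α n f := by
  unfold distInt14
  rw [Finset.mul_sum]
  refine Finset.sum_congr rfl fun w _ => ?_
  rw [Matrix.smul_vecMul]
  have hs : ∑ j, (c • (α ᵥ* wordProd14 w)) j = c * ∑ j, (α ᵥ* wordProd14 w) j := by
    simp [Fin.sum_univ_two]; ring
  rw [hs]
  have hsm : (c * ∑ j, (α ᵥ* wordProd14 w) j)⁻¹ • (c • (α ᵥ* wordProd14 w)) =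
      (∑ j, (α ᵥ* wordProd14 w) j)⁻¹ • (α ᵥ* wordProd14 w) := by
    rw [mul_inv, mul_comm c⁻¹, smul_smul, mul_assoc, inv_mul_cancel₀ hc, mul_one]
  rw [hsm]; ring

lemma distInt14_zero_vec (n : ℕ) (f : (Fin 2 → ℝ) → ℝ) :
    distInt14 0 n f = 0 := by
  unfold distInt14
  refine Finset.sum_eq_zero fun w _ => ?_
  rw [Matrix.zero_vecMul]
  simp

lemma e0_vecMul_0 : (![1, 0] : Fin 2 → ℝ) ᵥ* Mex14 0 = 0 := by
  funext j; fin_cases j <;> simp [Mex14, Matrix.vecMul, dotProduct, Fin.sum_univ_two]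

lemma e0_vecMul_1 : (![1, 0] : Fin 2 → ℝ) ᵥ* Mex14 1 = ![0, 1] := by
  funext j; fin_cases j <;> simp [Mex14, Matrix.vecMul, dotProduct, Fin.sum_univ_two]

lemma e1_vecMul_0 : (![0, 1] : Fin 2 → ℝ) ᵥ* Mex14 0 = ![1, 0] := by
  funext j; fin_cases j <;> simp [Mex14, Matrix.vecMul, dotProduct, Fin.sum_univ_two]

lemma e1_vecMul_1 : (![0, 1] : Fin 2 → ℝ) ᵥ* Mex14 1 = 0 := by
  funext j; fin_cases j <;> simp [Mex14, Matrix.vecMul, dotProduct, Fin.sum_univ_two]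

lemma distInt14_nil (α : Fin 2 → ℝ) (f : (Fin 2 → ℝ) → ℝ) :
    distInt14 α 0 f = (∑ j, α j) * f ((∑ j, α j)⁻¹ • α) := by
  unfold distInt14
  rw [Finset.sum_eq_single (fun i => i.elim0)]
  · simp [wordProd14]
  · intro b _ hb; exact absurd (funext fun i => i.elim0) hb
  · intro h; exact absurd (Finset.mem_univ _) h

-- the alternation lemma, joint induction
lemma distInt14_basis (n : ℕ) (f : (Fin 2 → ℝ) → ℝ) :
    distInt14 ![1,0] n f = (if Even n then f ![1,0] else f ![0,1]) ∧
    distInt14 ![0,1] n f = (if Even n then f ![0,1] else f ![1,0]) := by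
  induction n with
  | zero =>
    constructor <;>
    · rw [distInt14_nil]
      norm_num [Fin.sum_univ_two]
  | succ n ih =>
    have h0 : distInt14 ![1,0] (n+1) f = distInt14 ![0,1] n f := by
      rw [distInt14_succ, Fin.sum_univ_two, e0_vecMul_0, e0_vecMul_1, distInt14_zero_vec, zero_add]
    have h1 : distInt14 ![0,1] (n+1) f = distInt14 ![1,0] n f := by
      rw [distInt14_succ, Fin.sum_univ_two, e1_vecMul_0, e1_vecMul_1, distInt14_zero_vec, add_zero]
    rw [h0, h1, ih.1, ih.2]
    rcases Nat.even_or_odd n with h | h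
    · simp [h, Nat.even_add_one]
    · have h' : ¬ Even n := Nat.not_even_iff_odd.mpr h
      simp [h', Nat.even_add_one]
section
variable (x : ℝ)

lemma alpha_vecMul_0 (x : ℝ) : (![x, 1-x] : Fin 2 → ℝ) ᵥ* Mex14 0 = (1-x) • ![1, 0] := by
  funext j; fin_cases j <;>
    simp [Mex14, Matrix.vecMul, dotProduct, Fin.sum_univ_two]

lemma alpha_vecMul_1 (x : ℝ) : (![x, 1-x] : Fin 2 → ℝ) ᵥ* Mex14 1 = x • ![0, 1] := by
  funext j; fin_cases j <;>
    simp [Mex14, Matrix.vecMul, dotProduct, Fin.sum_univ_two]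

lemma distInt14_step (x : ℝ) (hx0 : x ≠ 0) (hx1 : 1 - x ≠ 0) (n : ℕ) (f : (Fin 2 → ℝ) → ℝ) :
    distInt14 ![x, 1-x] (n+1) f =
      (1-x) * (if Even n then f ![1,0] else f ![0,1]) +
      x * (if Even n then f ![0,1] else f ![1,0]) := by
  rw [distInt14_succ, Fin.sum_univ_two, alpha_vecMul_0, alpha_vecMul_1,
    distInt14_smul _ hx1, distInt14_smul _ hx0, (distInt14_basis n f).1,
    (distInt14_basis n f).2]

end

/-- For this HMM (`M` irreducible but periodic), starting from `α₀ = (x, 1−x)` with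
`x ∉ {0, 1/2, 1}`, the distributions of `α_{2n}` converge weakly to `x δ_{(1,0)} +
(1−x) δ_{(0,1)}`, those of `α_{2n+1}` converge weakly to `x δ_{(0,1)} + (1−x) δ_{(1,0)}`,
these limits are distinct, and the distribution of `αₙ` does not converge weakly. -/
theorem stmt14 (x : ℝ) (hx0 : 0 < x) (hx1 : x < 1) (hxh : x ≠ 1/2) :
    (∀ f : (Fin 2 → ℝ) → ℝ, ContinuousOn f (stdSimplex ℝ (Fin 2)) →
      Tendsto (fun n => distInt14 ![x, 1-x] (2*n) f) atTop
        (nhds (x * f ![1, 0] + (1-x) * f ![0, 1])) ∧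
      Tendsto (fun n => distInt14 ![x, 1-x] (2*n+1) f) atTop
        (nhds (x * f ![0, 1] + (1-x) * f ![1, 0]))) ∧
    (∃ f : (Fin 2 → ℝ) → ℝ, ContinuousOn f (stdSimplex ℝ (Fin 2)) ∧
      x * f ![1, 0] + (1-x) * f ![0, 1] ≠ x * f ![0, 1] + (1-x) * f ![1, 0]) ∧
    ¬ (∀ f : (Fin 2 → ℝ) → ℝ, ContinuousOn f (stdSimplex ℝ (Fin 2)) →
        ∃ L : ℝ, Tendsto (fun n => distInt14 ![x, 1-x] n f) atTop (nhds L)) := by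
  have hx0' : x ≠ 0 := ne_of_gt hx0
  have hx1' : (1:ℝ) - x ≠ 0 := by linarith [hx1]
  have heven : ∀ f : (Fin 2 → ℝ) → ℝ, ∀ n : ℕ, 1 ≤ n →
      distInt14 ![x, 1-x] (2*n) f = x * f ![1, 0] + (1-x) * f ![0, 1] := by
    intro f n hn
    obtain ⟨m, rfl⟩ : ∃ m, n = m + 1 := ⟨n - 1, by omega⟩
    have h2 : 2 * (m + 1) = (2*m+1) + 1 := by ring
    rw [h2, distInt14_step x hx0' hx1']
    have : ¬ Even (2*m+1) := by simp [Nat.even_add_one]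
    rw [if_neg this, if_neg this]; ring
  have hodd : ∀ f : (Fin 2 → ℝ) → ℝ, ∀ n : ℕ,
      distInt14 ![x, 1-x] (2*n+1) f = x * f ![0, 1] + (1-x) * f ![1, 0] := by
    intro f n
    rw [distInt14_step x hx0' hx1']
    have : Even (2*n) := even_two_mul n
    rw [if_pos this, if_pos this]; ring
  have hTe : ∀ f : (Fin 2 → ℝ) → ℝ,
      Tendsto (fun n => distInt14 ![x, 1-x] (2*n) f) atTop
        (nhds (x * f ![1, 0] + (1-x) * f ![0, 1])) := by
    intro f
    refine Tendsto.congr' ?_ tendsto_const_nhds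
    filter_upwards [eventually_ge_atTop 1] with n hn
    exact (heven f n hn).symm
  have hTo : ∀ f : (Fin 2 → ℝ) → ℝ,
      Tendsto (fun n => distInt14 ![x, 1-x] (2*n+1) f) atTop
        (nhds (x * f ![0, 1] + (1-x) * f ![1, 0])) := by
    intro f
    refine Tendsto.congr (fun n => (hodd f n).symm) tendsto_const_nhds
  refine ⟨fun f _ => ⟨hTe f, hTo f⟩, ?_, ?_⟩
  · refine ⟨fun v => v 0, (continuous_apply 0).continuousOn, ?_⟩
    simp only [Matrix.cons_val_zero]
    intro h
    apply hxh
    norm_num at h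
    linarith
  · intro h
    obtain ⟨L, hL⟩ := h (fun v => v 0) (continuous_apply 0).continuousOn
    have h2 : Tendsto (fun n : ℕ => 2*n) atTop atTop :=
      tendsto_atTop_atTop_of_monotone (fun a b hab => by omega) (fun b => ⟨b, by omega⟩)
    have h3 : Tendsto (fun n : ℕ => 2*n+1) atTop atTop :=
      tendsto_atTop_atTop_of_monotone (fun a b hab => by omega) (fun b => ⟨b, by omega⟩)
    have hLe : L = x * (1:ℝ) + (1-x) * 0 :=
      tendsto_nhds_unique (hL.comp h2) (by simpa [Function.comp_def] using hTe (fun v => v 0))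
    have hLo : L = x * 0 + (1-x) * (1:ℝ) :=
      tendsto_nhds_unique (hL.comp h3) (by simpa [Function.comp_def] using hTo (fun v => v 0))
    apply hxh
    rw [hLe] at hLo
    linarith
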